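/- Let ψ be a minimal b-coloring of G with k colors, k ≥ χ(G)+1, and x a non-b-vertex that is mutable with |ψ(U(x))| = 1. Then G has a b-coloring with k−1 colors. -/

import Mathlib

def IsBVertex {V : Type*} (G : SimpleGraph V) {k : ℕ} (ψ : V → Fin k) (u : V) : Prop :=
  ∀ c : Fin k, c ≠ ψ u → ∃ v, G.Adj u v ∧ ψ v = c

def IsBColoring {V : Type*} (G : SimpleGraph V) (k : ℕ) (ψ : V → Fin k) : Prop :=
  (∀ u v, G.Adj u v → ψ u ≠ ψ v) ∧ ∀ c : Fin k, ∃ u, ψ u = c ∧ IsBVertex G ψ u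

/-- A b-coloring with `k` colors minimizing the number of b-vertices. -/
def MinimalBColoring {V : Type*} (G : SimpleGraph V) (k : ℕ) (ψ : V → Fin k) : Prop :=
  IsBColoring G k ψ ∧ ∀ φ : V → Fin k, IsBColoring G k φ →
    {u | IsBVertex G ψ u}.ncard ≤ {u | IsBVertex G φ u}.ncard

/-- `U(x)`: the b-vertices `w` such that `x` is the unique neighbor of `w` colored `ψ x`. -/
def USet {V : Type*} (G : SimpleGraph V) {k : ℕ} (ψ : V → Fin k) (x : V) : Set V :=
  {w | IsBVertex G ψ w ∧ {v | G.Adj w v ∧ ψ v = ψ x} = {x}}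

/-- `x` is mutable: there is a safe color `i` outside `ψ(N[x])` such that changing the color
of `x` to `i` creates no new b-vertex among the non-b-vertex neighbors of `x`. -/
def Mutable {V : Type*} (G : SimpleGraph V) {k : ℕ} (ψ : V → Fin k) (x : V) : Prop :=
  ∃ i : Fin k, i ∉ ψ '' (insert x (G.neighborSet x)) ∧
    ∀ w, G.Adj x w → ¬ IsBVertex G ψ w →
      {c : Fin k | c ∉ ψ '' ((insert w (G.neighborSet w)) \ {x})} ≠ {i}

theorem stmt12 {V : Type*} [Fintype V] (G : SimpleGraph V) (k : ℕ)
    (hk : G.chromaticNumber + 1 ≤ (k : ℕ∞)) (ψ : V → Fin k)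
    (hmin : MinimalBColoring G k ψ) (x : V) (hx : ¬ IsBVertex G ψ x)
    (hmut : Mutable G ψ x) (hU : (ψ '' USet G ψ x).ncard = 1) :
    ∃ φ : V → Fin (k - 1), IsBColoring G (k - 1) φ := by
  classical
  obtain ⟨⟨hprop, hbex⟩, hψmin⟩ := hmin
  obtain ⟨i, hi_safe, hi_mut⟩ := hmut
  have hix : i ≠ ψ x := fun h => hi_safe ⟨x, Set.mem_insert _ _, h.symm⟩
  have hiN : ∀ w, G.Adj x w → i ≠ ψ w := fun w hw h =>
    hi_safe ⟨w, Set.mem_insert_of_mem _ hw, h.symm⟩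
  obtain ⟨c, hc⟩ := Set.ncard_eq_one.mp hU
  have hUne : ∃ w₀, w₀ ∈ USet G ψ x := by
    have hcm : c ∈ ψ '' USet G ψ x := by rw [hc]; exact rfl
    obtain ⟨w₀, hw₀, _⟩ := hcm
    exact ⟨w₀, hw₀⟩
  obtain ⟨w₀, hw₀U⟩ := hUne
  have hUcol : ∀ w ∈ USet G ψ x, ψ w = c := by
    intro w hw
    have : ψ w ∈ ψ '' USet G ψ x := ⟨w, hw, rfl⟩
    rwa [hc, Set.mem_singleton_iff] at this
  set ψ' : V → Fin k := Function.update ψ x i with hψ'def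
  have hψ'x : ψ' x = i := Function.update_self x i ψ
  have hψ'ne : ∀ v, v ≠ x → ψ' v = ψ v := fun v hv => Function.update_of_ne hv i ψ
  -- ψ' is a proper coloring
  have hprop' : ∀ u v, G.Adj u v → ψ' u ≠ ψ' v := by
    intro u v huv
    by_cases hu : u = x
    · have hxv : G.Adj x v := hu ▸ huv
      have hv : v ≠ x := fun h => G.loopless.irrefl x (h ▸ hxv)
      rw [hu, hψ'x, hψ'ne v hv]
      exact hiN v hxv
    · by_cases hv : v = x
      · have hux : G.Adj u x := hv ▸ huv
        rw [hψ'ne u hu, hv, hψ'x]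
        exact fun h => hiN u hux.symm h.symm
      · rw [hψ'ne u hu, hψ'ne v hv]; exact hprop u v huv
  -- x is not a b-vertex of ψ'
  have hx' : ¬ IsBVertex G ψ' x := by
    intro hb
    obtain ⟨v, hvx, hv⟩ := hb (ψ x) (by rw [hψ'x]; exact fun h => hix h.symm)
    have hvne : v ≠ x := fun h => G.loopless.irrefl x (h ▸ hvx)
    rw [hψ'ne v hvne] at hv
    exact hprop x v hvx hv.symm
  -- no neighbor of x which is not a b-vertex becomes one
  have hL2 : ∀ w, G.Adj x w → ¬ IsBVertex G ψ w → ¬ IsBVertex G ψ' w := by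
    intro w hxw hnb hb'
    have hwx : w ≠ x := fun h => G.loopless.irrefl x (h ▸ hxw.symm)
    have hψ'w : ψ' w = ψ w := hψ'ne w hwx
    have hnb' : ∃ d : Fin k, d ≠ ψ w ∧ ∀ v, G.Adj w v → ψ v ≠ d := by
      unfold IsBVertex at hnb; push_neg at hnb
      obtain ⟨d, hd1, hd2⟩ := hnb
      exact ⟨d, hd1, hd2⟩
    obtain ⟨d₀, hd₀1, hd₀2⟩ := hnb'
    -- d₀ must be i
    have hd₀i : d₀ = i := by
      obtain ⟨v, hvadj, hv⟩ := hb' d₀ (by rw [hψ'w]; exact hd₀1)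
      by_cases hvx : v = x
      · rw [hvx, hψ'x] at hv; exact hv.symm
      · exact absurd (by rw [← hψ'ne v hvx]; exact hv) (hd₀2 v hvadj)
    subst hd₀i
    apply hi_mut w hxw hnb
    ext d
    simp only [Set.mem_setOf_eq, Set.mem_singleton_iff]
    constructor
    · intro hd
      by_contra hdi
      by_cases hdw : d = ψ w
      · exact hd ⟨w, ⟨Set.mem_insert _ _, hwx⟩, hdw.symm⟩
      · obtain ⟨v, hvadj, hv⟩ := hb' d (by rw [hψ'w]; exact hdw)
        by_cases hvx : v = x
        · rw [hvx, hψ'x] at hv; exact hdi hv.symm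
        · rw [hψ'ne v hvx] at hv
          exact hd ⟨v, ⟨Set.mem_insert_of_mem _ hvadj, hvx⟩, hv⟩
    · rintro rfl
      rintro ⟨v, ⟨hv_in, hv_ne_x⟩, hv⟩
      rcases hv_in with h | h
      · exact hiN w hxw (h ▸ hv).symm
      · exact hd₀2 v h hv
  -- b-vertices of ψ outside USet remain b-vertices of ψ'
  have hL3 : ∀ w, IsBVertex G ψ w → w ∉ USet G ψ x → IsBVertex G ψ' w := by
    intro w hb hwU d hd
    have hwx : w ≠ x := fun h => hx (h ▸ hb)
    rw [hψ'ne w hwx] at hd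
    obtain ⟨v, hvadj, hv⟩ := hb d hd
    by_cases hvx : v = x
    · rw [hvx] at hvadj hv
      have hset : {v | G.Adj w v ∧ ψ v = ψ x} ≠ {x} := fun h => hwU ⟨hb, h⟩
      have hxmem : x ∈ {v | G.Adj w v ∧ ψ v = ψ x} := ⟨hvadj, rfl⟩
      have hex : ∃ v', v' ∈ {v | G.Adj w v ∧ ψ v = ψ x} ∧ v' ≠ x := by
        by_contra h
        push_neg at h
        exact hset (Set.eq_singleton_iff_unique_mem.mpr ⟨hxmem, fun y hy => h y hy⟩)
      obtain ⟨v', ⟨hv'adj, hv'col⟩, hv'x⟩ := hex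
      exact ⟨v', hv'adj, by rw [hψ'ne v' hv'x, hv'col, hv]⟩
    · exact ⟨v, hvadj, by rw [hψ'ne v hvx, hv]⟩
  -- members of USet are not b-vertices of ψ'
  have hL4 : ∀ w ∈ USet G ψ x, ¬ IsBVertex G ψ' w := by
    intro w hw hb'
    obtain ⟨hwb, hwset⟩ := hw
    have hxmem : x ∈ {v | G.Adj w v ∧ ψ v = ψ x} := by rw [hwset]; exact rfl
    obtain ⟨hwadjx, -⟩ := hxmem
    have hwx : w ≠ x := fun h => G.loopless.irrefl x (h ▸ hwadjx)
    have hne : ψ x ≠ ψ' w := by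
      rw [hψ'ne w hwx]; exact fun h => hprop w x hwadjx h.symm
    obtain ⟨v, hvadj, hv⟩ := hb' (ψ x) hne
    by_cases hvx : v = x
    · rw [hvx, hψ'x] at hv; exact hix hv
    · rw [hψ'ne v hvx] at hv
      have : v ∈ {v | G.Adj w v ∧ ψ v = ψ x} := ⟨hvadj, hv⟩
      rw [hwset] at this
      exact hvx this
  -- b-vertices of ψ' are b-vertices of ψ
  have hL5 : {u | IsBVertex G ψ' u} ⊆ {u | IsBVertex G ψ u} := by
    intro w hw
    simp only [Set.mem_setOf_eq] at hw ⊢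
    by_cases hwx : w = x
    · exact absurd (hwx ▸ hw) hx'
    by_cases hadj : G.Adj x w
    · by_contra hnb; exact hL2 w hadj hnb hw
    · intro d hd
      rw [← hψ'ne w hwx] at hd
      obtain ⟨v, hvadj, hv⟩ := hw d hd
      have hvx : v ≠ x := fun h => hadj ((h ▸ hvadj).symm)
      rw [hψ'ne v hvx] at hv
      exact ⟨v, hvadj, hv⟩
  -- ψ' is not a b-coloring (by minimality)
  have hnotb' : ¬ IsBColoring G k ψ' := by
    intro hb'
    have hss : {u | IsBVertex G ψ' u} ⊂ {u | IsBVertex G ψ u} :=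
      (Set.ssubset_iff_of_subset hL5).mpr ⟨w₀, hw₀U.1, hL4 w₀ hw₀U⟩
    have hlt := Set.ncard_lt_ncard hss (Set.toFinite _)
    exact absurd (hψmin ψ' hb') (not_le.mpr hlt)
  -- every color other than c has a b-vertex of ψ'
  have hL7 : ∀ d : Fin k, d ≠ c → ∃ w, ψ' w = d ∧ IsBVertex G ψ' w := by
    intro d hd
    obtain ⟨u, hu, hub⟩ := hbex d
    have huU : u ∉ USet G ψ x := fun h => hd (hu.symm.trans (hUcol u h))
    have hux : u ≠ x := fun h => hx (h ▸ hub)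
    exact ⟨u, by rw [hψ'ne u hux, hu], hL3 u hub huU⟩
  -- no vertex colored c is a b-vertex of ψ'
  have hL8 : ∀ w, ψ' w = c → ¬ IsBVertex G ψ' w := by
    intro w hwc hb
    apply hnotb'
    refine ⟨hprop', fun d => ?_⟩
    by_cases hd : d = c
    · exact ⟨w, hd ▸ hwc, hb⟩
    · exact hL7 d hd
  -- recolor the vertices of color c
  have hchoice : ∀ v, ∃ d : Fin k, ψ' v = c → (d ≠ c ∧ ∀ u, G.Adj v u → ψ' u ≠ d) := by
    intro v
    by_cases hv : ψ' v = c
    · have hnb := hL8 v hv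
      unfold IsBVertex at hnb; push_neg at hnb
      obtain ⟨d, hd1, hd2⟩ := hnb
      exact ⟨d, fun _ => ⟨fun h => hd1 (h.trans hv.symm), hd2⟩⟩
    · exact ⟨ψ' v, fun h => absurd h hv⟩
  choose dfun hdfun using hchoice
  have hd1 : ∀ v, ψ' v = c → dfun v ≠ c := fun v h => (hdfun v h).1
  have hd2 : ∀ v, ψ' v = c → ∀ u, G.Adj v u → ψ' u ≠ dfun v := fun v h => (hdfun v h).2
  set φ₀ : V → Fin k := fun v => if ψ' v = c then dfun v else ψ' v with hφ₀
  have hφ₀eqc : ∀ v, ψ' v = c → φ₀ v = dfun v := fun v h => by simp only [hφ₀, if_pos h]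
  have hφ₀eq : ∀ v, ψ' v ≠ c → φ₀ v = ψ' v := fun v h => by simp only [hφ₀, if_neg h]
  have hφ₀ne : ∀ v, φ₀ v ≠ c := by
    intro v
    by_cases h : ψ' v = c
    · rw [hφ₀eqc v h]; exact hd1 v h
    · rw [hφ₀eq v h]; exact h
  have hφ₀prop : ∀ u v, G.Adj u v → φ₀ u ≠ φ₀ v := by
    intro u v huv
    by_cases hu : ψ' u = c <;> by_cases hv : ψ' v = c
    · exact absurd (hu.trans hv.symm) (hprop' u v huv)
    · rw [hφ₀eqc u hu, hφ₀eq v hv]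
      exact fun h => hd2 u hu v huv h.symm
    · rw [hφ₀eq u hu, hφ₀eqc v hv]
      exact fun h => hd2 v hv u huv.symm h
    · rw [hφ₀eq u hu, hφ₀eq v hv]; exact hprop' u v huv
  -- k ≥ 2
  have hk0 : k ≠ 0 := by rintro rfl; exact (ψ x).elim0
  have hk1 : k ≠ 1 := by
    rintro rfl
    exact hx (fun c hc => absurd (Subsingleton.elim c (ψ x)) hc)
  -- the equivalence
  have hcard : Fintype.card {j : Fin k // j ≠ c} = k - 1 := by
    simp [Fintype.card_subtype_compl, Fintype.card_subtype_eq]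
  let e : {j : Fin k // j ≠ c} ≃ Fin (k - 1) := Fintype.equivFinOfCardEq hcard
  refine ⟨fun v => e ⟨φ₀ v, hφ₀ne v⟩, ?_, ?_⟩
  · intro u v huv h
    exact hφ₀prop u v huv (congrArg Subtype.val (e.injective h))
  · intro c'
    obtain ⟨w, hw1, hw2⟩ := hL7 (e.symm c').1 (e.symm c').2
    have hφ₀w : φ₀ w = (e.symm c').1 := by
      rw [hφ₀eq w (by rw [hw1]; exact (e.symm c').2), hw1]
    have hφw : e ⟨φ₀ w, hφ₀ne w⟩ = c' := by
      have : (⟨φ₀ w, hφ₀ne w⟩ : {j : Fin k // j ≠ c}) = e.symm c' := Subtype.ext hφ₀w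
      rw [this, Equiv.apply_symm_apply]
    refine ⟨w, hφw, ?_⟩
    intro c'' hc''
    change c'' ≠ e ⟨φ₀ w, hφ₀ne w⟩ at hc''
    rw [hφw] at hc''
    have hdd : (e.symm c'').1 ≠ (e.symm c').1 := by
      intro h
      exact hc'' (by rw [← Equiv.apply_symm_apply e c'', Subtype.ext h,
        Equiv.apply_symm_apply])
    obtain ⟨v, hvadj, hv⟩ := hw2 (e.symm c'').1 (by rw [hw1]; exact hdd)
    refine ⟨v, hvadj, ?_⟩
    show e ⟨φ₀ v, hφ₀ne v⟩ = c''
    have hφ₀v : φ₀ v = (e.symm c'').1 := by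
      rw [hφ₀eq v (by rw [hv]; exact (e.symm c'').2), hv]
    have : (⟨φ₀ v, hφ₀ne v⟩ : {j : Fin k // j ≠ c}) = e.symm c'' := Subtype.ext hφ₀v
    rw [this, Equiv.apply_symm_apply]
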